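/- Let V be a countable type and P : V → V → ℝ a stochastic kernel: P x y ≥ 0 for all x, y and ∑'_y P x y = 1 for all x. Define k-step transition probabilities by P₁ = P and P_{k+1} x z = ∑'_y (P x y) · (P_k y z), first-hitting probabilities by F₁ x y = P x y and F_{m+1} x y = ∑'_{z ≠ y} (P x z) · (F_m z y), and Cesàro averages g_n x z = (1/n) ∑_{k=1}^{n} P_k x z. Let x, y ∈ V and suppose the walk is recurrent between x and y in the sense that ∑'_{m ≥ 1} F_m x y = 1 and ∑'_{m ≥ 1} F_m y x = 1. Then lim_{n → ∞} ∑'_z |g_n x z − g_n y z| = 0. -/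

import Mathlib

open scoped BigOperators

/-- `kStep P k` is the `(k+1)`-step transition kernel of the Markov kernel `P`:
`kStep P 0 = P` (one step) and `kStep P (k+1) x z = ∑' y, P x y * kStep P k y z`,
so `kStep P (k-1)` is the paper's `P_k`. -/
noncomputable def kStep {V : Type*} (P : V → V → ℝ) : ℕ → V → V → ℝ
  | 0 => P
  | (k + 1) => fun x z => ∑' y, P x y * kStep P k y z

/-- `firstHit P m x y` is the probability that the walk started at `x` first hits `y`
at time `m+1`: `firstHit P 0 = P` (the paper's `F₁`) and
`firstHit P (m+1) x y = ∑'_{z ≠ y} P x z * firstHit P m z y` (the paper's `F_{m+2}`). -/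
noncomputable def firstHit {V : Type*} [DecidableEq V] (P : V → V → ℝ) : ℕ → V → V → ℝ
  | 0 => P
  | (m + 1) => fun x y => ∑' z, if z = y then 0 else P x z * firstHit P m z y

/-- Cesàro average of the first `n` transition kernels:
`cesaro P n x z = (1/n) ∑_{k=1}^{n} P_k x z`. -/
noncomputable def cesaro {V : Type*} (P : V → V → ℝ) (n : ℕ) (x z : V) : ℝ :=
  (1 / (n : ℝ)) * ∑ k ∈ Finset.range n, kStep P k x z

namespace RWRecurrentAux

open Filter Finset

variable {V : Type*} [Countable V] [DecidableEq V] {P : V → V → ℝ}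

/-- Paths avoiding `y`: `avoidK P y k x z` is the probability that the walk started at `x`
is at `z` at time `k+1` and has not visited `y` at times `1,…,k+1`. -/
noncomputable def avoidK (P : V → V → ℝ) [DecidableEq V] (y : V) : ℕ → V → V → ℝ
  | 0 => fun x z => if z = y then 0 else P x z
  | (k + 1) => fun x z => ∑' w, if w = y then 0 else P x w * avoidK P y k w z

section Basic

lemma summable_P (hstoch : ∀ x, ∑' y, P x y = 1) (x : V) : Summable (P x) := by
  by_contra h
  have h1 := hstoch x
  rw [tsum_eq_zero_of_not_summable h] at h1
  norm_num at h1

lemma P_le_one (hnn : ∀ x y, 0 ≤ P x y) (hstoch : ∀ x, ∑' y, P x y = 1) (x z : V) : P x z ≤ 1 := by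
  have := Summable.le_tsum (summable_P hstoch x) z (fun j _ => hnn x j)
  rw [hstoch x] at this
  exact this

lemma kStep_nonneg (hnn : ∀ x y, 0 ≤ P x y) : ∀ (k : ℕ) (x z : V), 0 ≤ kStep P k x z
  | 0, x, z => hnn x z
  | (k + 1), x, z =>
    tsum_nonneg fun w => mul_nonneg (hnn x w) (kStep_nonneg hnn k w z)

lemma kStep_spec (hnn : ∀ x y, 0 ≤ P x y) (hstoch : ∀ x, ∑' y, P x y = 1) : ∀ (k : ℕ) (x : V),
    Summable (kStep P k x) ∧ ∑' z, kStep P k x z = 1 := by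
  intro k
  induction k with
  | zero => exact fun x => ⟨summable_P hstoch x, hstoch x⟩
  | succ k ih =>
    intro x
    have hs : ∀ w, Summable (fun z => P x w * kStep P k w z) :=
      fun w => ((ih w).1).mul_left _
    have hts : ∀ w, ∑' z, P x w * kStep P k w z = P x w := by
      intro w; rw [tsum_mul_left, (ih w).2, mul_one]
    have hprod : Summable (fun p : V × V => P x p.1 * kStep P k p.1 p.2) := by
      refine (summable_prod_of_nonneg ?_).2 ⟨fun w => hs w, ?_⟩
      · intro p; exact mul_nonneg (hnn _ _) (kStep_nonneg hnn _ _ _)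
      · simpa [hts] using summable_P hstoch x
    have h1 : Summable (fun z => ∑' w, P x w * kStep P k w z) := hprod.prod_symm.prod
    have heq : kStep P (k + 1) x = fun z => ∑' w, P x w * kStep P k w z := rfl
    constructor
    · rw [heq]; exact h1
    · rw [heq]
      have := Summable.tsum_comm (f := fun w z => P x w * kStep P k w z) hprod
      rw [this]
      simp only [hts]
      exact hstoch x

lemma summable_kStep (hnn : ∀ x y, 0 ≤ P x y) (hstoch : ∀ x, ∑' y, P x y = 1) (k : ℕ) (x : V) : Summable (kStep P k x) :=
  (kStep_spec hnn hstoch k x).1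

lemma tsum_kStep (hnn : ∀ x y, 0 ≤ P x y) (hstoch : ∀ x, ∑' y, P x y = 1) (k : ℕ) (x : V) : ∑' z, kStep P k x z = 1 :=
  (kStep_spec hnn hstoch k x).2

lemma kStep_le_one (hnn : ∀ x y, 0 ≤ P x y) (hstoch : ∀ x, ∑' y, P x y = 1) (k : ℕ) (x z : V) : kStep P k x z ≤ 1 := by
  have := Summable.le_tsum (summable_kStep hnn hstoch k x) z
    (fun j _ => kStep_nonneg hnn k x j)
  rwa [tsum_kStep hnn hstoch k x] at this

lemma firstHit_nonneg (hnn : ∀ x y, 0 ≤ P x y) : ∀ (m : ℕ) (x y : V), 0 ≤ firstHit P m x y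
  | 0, x, y => hnn x y
  | (m + 1), x, y => tsum_nonneg fun z => by
      by_cases h : z = y <;> simp [firstHit, h, mul_nonneg (hnn x z) (firstHit_nonneg hnn m z y)]

lemma summable_ite_mul (hnn : ∀ x y, 0 ≤ P x y) (hstoch : ∀ x, ∑' y, P x y = 1) (x y : V) {c : V → ℝ} (h0 : ∀ w, 0 ≤ c w) (h1 : ∀ w, c w ≤ 1) :
    Summable (fun w => if w = y then 0 else P x w * c w) := by
  refine (summable_P hstoch x).of_nonneg_of_le ?_ ?_
  · intro w
    by_cases h : w = y <;> simp [h, mul_nonneg (hnn x w) (h0 w)]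
  · intro w
    by_cases h : w = y
    · simp [h, hnn]
    · simp only [h, if_false]
      calc P x w * c w ≤ P x w * 1 := by
            exact mul_le_mul_of_nonneg_left (h1 w) (hnn x w)
        _ = P x w := mul_one _

lemma firstHit_le_one (hnn : ∀ x y, 0 ≤ P x y) (hstoch : ∀ x, ∑' y, P x y = 1) : ∀ (m : ℕ) (x y : V), firstHit P m x y ≤ 1
  | 0, x, y => P_le_one hnn hstoch x y
  | (m + 1), x, y => by
      have h0 : ∀ w, 0 ≤ firstHit P m w y := fun w => firstHit_nonneg hnn m w y
      have h1 : ∀ w, firstHit P m w y ≤ 1 := fun w => firstHit_le_one hnn hstoch m w y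
      have hsum := summable_ite_mul hnn hstoch x y h0 h1
      have heq : firstHit P (m + 1) x y
          = ∑' z, if z = y then 0 else P x z * firstHit P m z y := rfl
      rw [heq]
      calc (∑' z, if z = y then 0 else P x z * firstHit P m z y)
          ≤ ∑' z, P x z := by
            refine Summable.tsum_le_tsum ?_ hsum (summable_P hstoch x)
            intro w
            by_cases h : w = y
            · simp [h, hnn]
            · simp only [h, if_false]
              calc P x w * firstHit P m w y ≤ P x w * 1 :=
                    mul_le_mul_of_nonneg_left (h1 w) (hnn x w)
                _ = P x w := mul_one _
        _ = 1 := hstoch x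

lemma avoidK_nonneg (hnn : ∀ x y, 0 ≤ P x y) (y : V) : ∀ (k : ℕ) (x z : V), 0 ≤ avoidK P y k x z
  | 0, x, z => by by_cases h : z = y <;> simp [avoidK, h, hnn x z]
  | (k + 1), x, z => tsum_nonneg fun w => by
      by_cases h : w = y <;>
        simp [avoidK, h, mul_nonneg (hnn x w) (avoidK_nonneg hnn y k w z)]

lemma avoidK_le_one (hnn : ∀ x y, 0 ≤ P x y) (hstoch : ∀ x, ∑' y, P x y = 1) (y : V) : ∀ (k : ℕ) (x z : V), avoidK P y k x z ≤ 1
  | 0, x, z => by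
      by_cases h : z = y <;> simp [avoidK, h, P_le_one hnn hstoch x z]
  | (k + 1), x, z => by
      have h0 : ∀ w, 0 ≤ avoidK P y k w z := fun w => avoidK_nonneg hnn y k w z
      have h1 : ∀ w, avoidK P y k w z ≤ 1 := fun w => avoidK_le_one hnn hstoch y k w z
      have heq : avoidK P y (k + 1) x z
          = ∑' w, if w = y then 0 else P x w * avoidK P y k w z := rfl
      rw [heq]
      calc (∑' w, if w = y then 0 else P x w * avoidK P y k w z)
          ≤ ∑' w, P x w := by
            refine Summable.tsum_le_tsum ?_ (summable_ite_mul hnn hstoch x y h0 h1)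
              (summable_P hstoch x)
            intro w
            by_cases h : w = y
            · simp [h, hnn]
            · simp only [h, if_false]
              calc P x w * avoidK P y k w z ≤ P x w * 1 :=
                    mul_le_mul_of_nonneg_left (h1 w) (hnn x w)
                _ = P x w := mul_one _
        _ = 1 := hstoch x

/-- First-passage decomposition of the `k`-step kernel at the point `y`. -/
lemma kStep_decomp (hnn : ∀ x y, 0 ≤ P x y) (hstoch : ∀ x, ∑' y, P x y = 1) (y : V) : ∀ (k : ℕ) (x z : V),
    kStep P k x z =
      (∑ m ∈ Finset.range k, firstHit P m x y * kStep P (k - 1 - m) y z)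
        + firstHit P k x y * (if z = y then 1 else 0) + avoidK P y k x z := by
  intro k
  induction k with
  | zero =>
    intro x z
    simp only [Finset.range_zero, Finset.sum_empty, zero_add]
    by_cases h : z = y <;> simp [kStep, firstHit, avoidK, h]
  | succ k ih =>
    intro x z
    have hK1 : ∀ j w, 0 ≤ kStep P j w z := fun j w => kStep_nonneg hnn j w z
    have hK2 : ∀ j w, kStep P j w z ≤ 1 := fun j w => kStep_le_one hnn hstoch j w z
    have hksum : Summable (fun w => P x w * kStep P k w z) :=
      (summable_P hstoch x).of_nonneg_of_le
        (fun w => mul_nonneg (hnn x w) (hK1 k w))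
        (fun w => by
          calc P x w * kStep P k w z ≤ P x w * 1 :=
                mul_le_mul_of_nonneg_left (hK2 k w) (hnn x w)
            _ = P x w := mul_one _)
    have hsplit : kStep P (k + 1) x z
        = P x y * kStep P k y z + ∑' w, if w = y then 0 else P x w * kStep P k w z := by
      have heq : kStep P (k + 1) x z = ∑' w, P x w * kStep P k w z := rfl
      rw [heq, Summable.tsum_eq_add_tsum_ite hksum y]
    -- rewrite the inner sum using the induction hypothesis
    set g1 : V → ℝ := fun w => ∑ m ∈ Finset.range k,
      (if w = y then 0 else P x w * firstHit P m w y) * kStep P (k - 1 - m) y z with hg1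
    set g2 : V → ℝ := fun w =>
      (if w = y then 0 else P x w * firstHit P k w y) * (if z = y then 1 else 0) with hg2
    set g3 : V → ℝ := fun w =>
      if w = y then 0 else P x w * avoidK P y k w z with hg3
    have hfun : ∀ w, (if w = y then 0 else P x w * kStep P k w z)
        = g1 w + g2 w + g3 w := by
      intro w
      by_cases h : w = y
      · simp [hg1, hg2, hg3, h]
      · simp only [hg1, hg2, hg3, h, if_false]
        rw [ih w z]
        rw [mul_add, mul_add, Finset.mul_sum]
        have hterm : ∀ m ∈ Finset.range k,
            P x w * (firstHit P m w y * kStep P (k - 1 - m) y z)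
              = (P x w * firstHit P m w y) * kStep P (k - 1 - m) y z :=
          fun m _ => by ring
        rw [Finset.sum_congr rfl hterm]
        ring
    have hs1 : Summable g1 := by
      refine summable_sum fun m _ => ?_
      exact (summable_ite_mul hnn hstoch x y
        (fun w => firstHit_nonneg hnn m w y)
        (fun w => firstHit_le_one hnn hstoch m w y)).mul_right _
    have hs2 : Summable g2 :=
      (summable_ite_mul hnn hstoch x y
        (fun w => firstHit_nonneg hnn k w y)
        (fun w => firstHit_le_one hnn hstoch k w y)).mul_right _
    have hs3 : Summable g3 :=
      summable_ite_mul hnn hstoch x y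
        (fun w => avoidK_nonneg hnn y k w z)
        (fun w => avoidK_le_one hnn hstoch y k w z)
    have hts : (∑' w, if w = y then 0 else P x w * kStep P k w z)
        = (∑' w, g1 w) + (∑' w, g2 w) + (∑' w, g3 w) := by
      calc (∑' w, if w = y then 0 else P x w * kStep P k w z)
          = ∑' w, (g1 w + g2 w + g3 w) := by
            exact tsum_congr hfun
        _ = (∑' w, (g1 w + g2 w)) + (∑' w, g3 w) := Summable.tsum_add (hs1.add hs2) hs3
        _ = (∑' w, g1 w) + (∑' w, g2 w) + (∑' w, g3 w) := by rw [Summable.tsum_add hs1 hs2]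
    have ht1 : (∑' w, g1 w) = ∑ m ∈ Finset.range k,
        firstHit P (m + 1) x y * kStep P (k - 1 - m) y z := by
      rw [hg1]
      rw [Summable.tsum_finsetSum (fun m _ => (summable_ite_mul hnn hstoch x y
        (fun w => firstHit_nonneg hnn m w y)
        (fun w => firstHit_le_one hnn hstoch m w y)).mul_right _)]
      refine Finset.sum_congr rfl fun m _ => ?_
      rw [tsum_mul_right]
      rfl
    have ht2 : (∑' w, g2 w) = firstHit P (k + 1) x y * (if z = y then 1 else 0) := by
      rw [hg2, tsum_mul_right]
      rfl
    have ht3 : (∑' w, g3 w) = avoidK P y (k + 1) x z := rfl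
    rw [hsplit, hts, ht1, ht2, ht3]
    rw [Finset.sum_range_succ' (fun m => firstHit P m x y * kStep P (k + 1 - 1 - m) y z) k]
    have hidx : ∀ m, k + 1 - 1 - (m + 1) = k - 1 - m := fun m => by omega
    have hidx0 : k + 1 - 1 - 0 = k := by omega
    simp only [hidx, hidx0]
    have h0 : firstHit P 0 x y = P x y := rfl
    rw [h0]
    ring

lemma summable_decompRest (hnn : ∀ x y, 0 ≤ P x y) (hstoch : ∀ x, ∑' y, P x y = 1) (y : V) (k : ℕ) (x : V) :
    Summable (fun z => (∑ m ∈ Finset.range k, firstHit P m x y * kStep P (k - 1 - m) y z)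
      + firstHit P k x y * (if z = y then 1 else 0)) := by
  refine Summable.add ?_ ?_
  · exact summable_sum fun m _ => (summable_kStep hnn hstoch (k - 1 - m) y).mul_left _
  · exact ((hasSum_ite_eq y (1 : ℝ)).summable).mul_left _

lemma summable_avoidK (hnn : ∀ x y, 0 ≤ P x y) (hstoch : ∀ x, ∑' y, P x y = 1) (y : V) (k : ℕ) (x : V) : Summable (avoidK P y k x) := by
  have heq : avoidK P y k x = fun z => kStep P k x z
      - ((∑ m ∈ Finset.range k, firstHit P m x y * kStep P (k - 1 - m) y z)
        + firstHit P k x y * (if z = y then 1 else 0)) := by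
    funext z
    rw [kStep_decomp hnn hstoch y k x z]
    ring
  rw [heq]
  exact (summable_kStep hnn hstoch k x).sub (summable_decompRest hnn hstoch y k x)

lemma tsum_avoidK (hnn : ∀ x y, 0 ≤ P x y) (hstoch : ∀ x, ∑' y, P x y = 1) (y : V) (k : ℕ) (x : V) :
    ∑' z, avoidK P y k x z = 1 - ∑ m ∈ Finset.range (k + 1), firstHit P m x y := by
  have h1 : ∑' z, kStep P k x z = 1 := tsum_kStep hnn hstoch k x
  have hdec : ∑' z, kStep P k x z
      = (∑' z, ((∑ m ∈ Finset.range k, firstHit P m x y * kStep P (k - 1 - m) y z)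
          + firstHit P k x y * (if z = y then 1 else 0)))
        + ∑' z, avoidK P y k x z := by
    calc ∑' z, kStep P k x z
        = ∑' z, (((∑ m ∈ Finset.range k, firstHit P m x y * kStep P (k - 1 - m) y z)
            + firstHit P k x y * (if z = y then 1 else 0)) + avoidK P y k x z) :=
          tsum_congr fun z => kStep_decomp hnn hstoch y k x z
      _ = _ := Summable.tsum_add (summable_decompRest hnn hstoch y k x)
              (summable_avoidK hnn hstoch y k x)
  have hrest : (∑' z, ((∑ m ∈ Finset.range k, firstHit P m x y * kStep P (k - 1 - m) y z)
      + firstHit P k x y * (if z = y then 1 else 0)))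
      = ∑ m ∈ Finset.range k, firstHit P m x y + firstHit P k x y := by
    rw [Summable.tsum_add (summable_sum fun m _ =>
        (summable_kStep hnn hstoch (k - 1 - m) y).mul_left _)
        (((hasSum_ite_eq y (1 : ℝ)).summable).mul_left _)]
    congr 1
    · rw [Summable.tsum_finsetSum (fun m _ => (summable_kStep hnn hstoch (k - 1 - m) y).mul_left _)]
      refine Finset.sum_congr rfl fun m _ => ?_
      rw [tsum_mul_left, tsum_kStep hnn hstoch, mul_one]
    · rw [tsum_mul_left, tsum_ite_eq, mul_one]
  rw [h1, hrest] at hdec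
  rw [Finset.sum_range_succ]
  linarith

lemma sum_firstHit_le_one (hnn : ∀ x y, 0 ≤ P x y) (hstoch : ∀ x, ∑' y, P x y = 1) (y : V) (n : ℕ) (x : V) :
    ∑ m ∈ Finset.range n, firstHit P m x y ≤ 1 := by
  cases n with
  | zero => simp
  | succ k =>
    have h := tsum_avoidK hnn hstoch y k x
    have h2 : 0 ≤ ∑' z, avoidK P y k x z :=
      tsum_nonneg fun z => avoidK_nonneg hnn y k x z
    linarith

end Basic

/-- Triangle sum swap. -/
lemma triangle_swap (f : ℕ → ℕ → ℝ) : ∀ n : ℕ,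
    ∑ k ∈ Finset.range n, ∑ m ∈ Finset.range k, f m (k - 1 - m)
      = ∑ m ∈ Finset.range n, ∑ j ∈ Finset.range (n - 1 - m), f m j := by
  intro n
  induction n with
  | zero => simp
  | succ n ih =>
    rw [Finset.sum_range_succ, ih]
    have hr : ∀ m ∈ Finset.range n, ∑ j ∈ Finset.range (n + 1 - 1 - m), f m j
        = ∑ j ∈ Finset.range (n - 1 - m), f m j + f m (n - 1 - m) := by
      intro m hm
      have hmn : m < n := Finset.mem_range.1 hm
      have : n + 1 - 1 - m = (n - 1 - m) + 1 := by omega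
      rw [this, Finset.sum_range_succ]
    rw [Finset.sum_range_succ (fun m => ∑ j ∈ Finset.range (n + 1 - 1 - m), f m j) n]
    rw [Finset.sum_congr rfl hr, Finset.sum_add_distrib]
    simp

/-- Abel-type bound: `∑_{m<n} (m+1)·F m ≤ ∑_{t<n} (1 - ∑_{m<t} F m)` for `F` with
partial sums at most 1. -/
lemma weighted_sum_identity (F : ℕ → ℝ) : ∀ n : ℕ,
    ∑ m ∈ Finset.range n, ((m : ℝ) + 1) * F m
      = (n : ℝ) * (∑ m ∈ Finset.range n, F m)
        - ∑ t ∈ Finset.range n, ∑ m ∈ Finset.range t, F m := by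
  intro n
  induction n with
  | zero => simp
  | succ n ih =>
    rw [Finset.sum_range_succ, ih, Finset.sum_range_succ (fun t => ∑ m ∈ Finset.range t, F m),
      Finset.sum_range_succ F]
    push_cast
    ring

end RWRecurrentAux

/-- Reiter-type property for recurrent random walks: if the walk a.s. hits `y` from `x`
and `x` from `y`, then the Cesàro averages of the walk distributions started at `x` and
at `y` are asymptotically close in total variation. -/
theorem cesaro_walk_distributions_close_of_recurrent
    {V : Type*} [Countable V] [DecidableEq V] (P : V → V → ℝ)
    (hnn : ∀ x y, 0 ≤ P x y) (hstoch : ∀ x, ∑' y, P x y = 1)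
    (x y : V)
    (hxy : ∑' m : ℕ, firstHit P m x y = 1)
    (hyx : ∑' m : ℕ, firstHit P m y x = 1) :
    Filter.Tendsto (fun n : ℕ => ∑' z, |cesaro P n x z - cesaro P n y z|)
      Filter.atTop (nhds 0) := by
  classical
  open RWRecurrentAux Finset Filter in
  -- notation
  set F : ℕ → ℝ := fun m => firstHit P m x y with hF
  set S : ℕ → ℝ := fun n => ∑ m ∈ Finset.range n, F m with hS
  set a : ℕ → ℝ := fun n => 1 - S n with ha
  have hFnn : ∀ m, 0 ≤ F m := fun m => firstHit_nonneg hnn m x y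
  have hSle : ∀ n, S n ≤ 1 := fun n => sum_firstHit_le_one hnn hstoch y n x
  have hSnn : ∀ n, 0 ≤ S n := fun n => Finset.sum_nonneg fun m _ => hFnn m
  have hann : ∀ n, 0 ≤ a n := fun n => by simp only [ha]; linarith [hSle n]
  -- convergence of S to 1, a to 0
  have hFsum : Summable F := summable_of_sum_range_le hFnn hSle
  have hStend : Filter.Tendsto S Filter.atTop (nhds 1) := by
    have := hFsum.hasSum.tendsto_sum_nat
    rwa [hxy] at this
  have hatend : Filter.Tendsto a Filter.atTop (nhds 0) := by
    have : Filter.Tendsto (fun n => 1 - S n) Filter.atTop (nhds (1 - 1)) :=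
      tendsto_const_nhds.sub hStend
    simpa using this
  -- the bound sequence
  set c : ℕ → ℝ := fun n =>
    (1 / (n : ℝ)) * (∑ t ∈ Finset.range n, a t) + 1 / (n : ℝ)
      + (1 / (n : ℝ)) * (∑ k ∈ Finset.range n, a (k + 1)) + a n with hc
  have hctend : Filter.Tendsto c Filter.atTop (nhds 0) := by
    have h1 : Filter.Tendsto (fun n : ℕ => (1 / (n : ℝ)) * ∑ t ∈ Finset.range n, a t)
        Filter.atTop (nhds 0) := by
      have := hatend.cesaro
      simpa only [← one_div] using this
    have h2 : Filter.Tendsto (fun n : ℕ => (1 / (n : ℝ)) * ∑ k ∈ Finset.range n, a (k + 1))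
        Filter.atTop (nhds 0) := by
      have hshift : Filter.Tendsto (fun k => a (k + 1)) Filter.atTop (nhds 0) :=
        hatend.comp (Filter.tendsto_add_atTop_nat 1)
      have := hshift.cesaro
      simpa only [← one_div] using this
    have h3 := tendsto_one_div_atTop_nhds_zero_nat (𝕜 := ℝ)
    have h4 := ((h1.add h3).add h2).add hatend
    simpa only [add_zero] using h4
  -- main bound: for every n, the total variation is at most c n
  have hbound : ∀ n : ℕ, (∑' z, |cesaro P n x z - cesaro P n y z|) ≤ c n := by
    intro n
    -- pieces
    set K : ℕ → V → ℝ := fun j z => kStep P j y z with hK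
    have hKsum : ∀ j, Summable (K j) := fun j => summable_kStep hnn hstoch j y
    have hKts : ∀ j, ∑' z, K j z = 1 := fun j => tsum_kStep hnn hstoch j y
    have hKnn : ∀ j z, 0 ≤ K j z := fun j z => kStep_nonneg hnn j y z
    set A : ℕ → V → ℝ := fun k z => avoidK P y k x z with hA
    have hAsum : ∀ k, Summable (A k) := fun k => summable_avoidK hnn hstoch y k x
    have hAnn : ∀ k z, 0 ≤ A k z := fun k z => avoidK_nonneg hnn y k x z
    have hAts : ∀ k, ∑' z, A k z = 1 - S (k + 1) := fun k => by
      simpa [hS, hF] using tsum_avoidK hnn hstoch y k x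
    set T1 : V → ℝ := fun z => ∑ m ∈ Finset.range n,
      F m * (∑ j ∈ Finset.Ico (n - 1 - m) n, K j z) with hT1
    set T2 : V → ℝ := fun z => S n * (if z = y then 1 else 0) with hT2
    set T3 : V → ℝ := fun z => ∑ k ∈ Finset.range n, A k z with hT3
    set T4 : V → ℝ := fun z => a n * (∑ j ∈ Finset.range n, K j z) with hT4
    -- pointwise identity
    have hid : ∀ z, ∑ k ∈ Finset.range n, kStep P k x z - ∑ j ∈ Finset.range n, K j z
        = -T1 z + T2 z + T3 z - T4 z := by
      intro z
      have hdec : ∑ k ∈ Finset.range n, kStep P k x z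
          = (∑ m ∈ Finset.range n, F m * (∑ j ∈ Finset.range (n - 1 - m), K j z))
            + S n * (if z = y then 1 else 0) + T3 z := by
        have h1 : ∑ k ∈ Finset.range n, kStep P k x z
            = ∑ k ∈ Finset.range n,
              ((∑ m ∈ Finset.range k, F m * K (k - 1 - m) z)
                + F k * (if z = y then 1 else 0) + A k z) :=
          Finset.sum_congr rfl fun k _ => kStep_decomp hnn hstoch y k x z
        rw [h1]
        rw [Finset.sum_add_distrib, Finset.sum_add_distrib]
        have ha1 : ∑ k ∈ Finset.range n, ∑ m ∈ Finset.range k, F m * K (k - 1 - m) z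
            = ∑ m ∈ Finset.range n, F m * (∑ j ∈ Finset.range (n - 1 - m), K j z) := by
          rw [triangle_swap (fun m j => F m * K j z) n]
          exact Finset.sum_congr rfl fun m _ => (Finset.mul_sum _ _ _).symm
        have ha2 : (∑ k ∈ Finset.range n, F k * (if z = y then 1 else 0))
            = S n * (if z = y then 1 else 0) := (Finset.sum_mul _ _ _).symm
        rw [ha1, ha2]
      have hIco : ∀ m, ∑ j ∈ Finset.range (n - 1 - m), K j z
          = ∑ j ∈ Finset.range n, K j z - ∑ j ∈ Finset.Ico (n - 1 - m) n, K j z := by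
        intro m
        have hle : n - 1 - m ≤ n := by omega
        rw [Finset.sum_Ico_eq_sub _ hle]
        ring
      have h2 : (∑ m ∈ Finset.range n, F m * (∑ j ∈ Finset.range (n - 1 - m), K j z))
          = S n * (∑ j ∈ Finset.range n, K j z) - T1 z := by
        rw [Finset.sum_congr rfl fun m _ => by rw [hIco m]]
        rw [hT1]
        rw [Finset.sum_congr rfl (fun m _ => mul_sub (F m) _ _), Finset.sum_sub_distrib]
        rw [← Finset.sum_mul]
      rw [hdec, h2]
      simp only [hT2, hT4, ha]
      ring
    -- nonnegativity of the pieces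
    have hT1nn : ∀ z, 0 ≤ T1 z := fun z => Finset.sum_nonneg fun m _ =>
      mul_nonneg (hFnn m) (Finset.sum_nonneg fun j _ => hKnn j z)
    have hT2nn : ∀ z, 0 ≤ T2 z := fun z =>
      mul_nonneg (hSnn n) (by positivity)
    have hT3nn : ∀ z, 0 ≤ T3 z := fun z => Finset.sum_nonneg fun k _ => hAnn k z
    have hT4nn : ∀ z, 0 ≤ T4 z := fun z =>
      mul_nonneg (hann n) (Finset.sum_nonneg fun j _ => hKnn j z)
    -- summability of the pieces
    have hsT1 : Summable T1 := summable_sum fun m _ =>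
      (summable_sum fun j _ => hKsum j).mul_left _
    have hsT2 : Summable T2 := ((hasSum_ite_eq y (1 : ℝ)).summable).mul_left _
    have hsT3 : Summable T3 := summable_sum fun k _ => hAsum k
    have hsT4 : Summable T4 := (summable_sum fun j _ => hKsum j).mul_left _
    set W : V → ℝ := fun z => T1 z + T2 z + T3 z + T4 z with hW
    have hsW : Summable W := ((hsT1.add hsT2).add hsT3).add hsT4
    -- tsum of the pieces
    have htT1 : ∑' z, T1 z ≤ ∑ m ∈ Finset.range n, ((m : ℝ) + 1) * F m := by
      rw [hT1, Summable.tsum_finsetSum (fun m _ => (summable_sum fun j _ => hKsum j).mul_left _)]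
      refine Finset.sum_le_sum fun m _ => ?_
      rw [tsum_mul_left, Summable.tsum_finsetSum (fun j _ => hKsum j)]
      have : ∑ j ∈ Finset.Ico (n - 1 - m) n, ∑' z, K j z
          = ((n - (n - 1 - m) : ℕ) : ℝ) := by
        simp [hKts]
      rw [this]
      have hcard : ((n - (n - 1 - m) : ℕ) : ℝ) ≤ (m : ℝ) + 1 := by
        have : n - (n - 1 - m) ≤ m + 1 := by omega
        exact_mod_cast this
      calc F m * ((n - (n - 1 - m) : ℕ) : ℝ) ≤ F m * ((m : ℝ) + 1) :=
            mul_le_mul_of_nonneg_left hcard (hFnn m)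
        _ = ((m : ℝ) + 1) * F m := mul_comm _ _
    have htT2 : ∑' z, T2 z = S n := by
      rw [hT2, tsum_mul_left, tsum_ite_eq, mul_one]
    have htT3 : ∑' z, T3 z = ∑ k ∈ Finset.range n, a (k + 1) := by
      rw [hT3, Summable.tsum_finsetSum (fun k _ => hAsum k)]
      exact Finset.sum_congr rfl fun k _ => hAts k
    have htT4 : ∑' z, T4 z = a n * n := by
      rw [hT4, tsum_mul_left, Summable.tsum_finsetSum (fun j _ => hKsum j)]
      simp [hKts]
    -- the weighted sum bound
    have hweight : ∑ m ∈ Finset.range n, ((m : ℝ) + 1) * F m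
        ≤ ∑ t ∈ Finset.range n, a t := by
      have hid2 := weighted_sum_identity F n
      have hsum_a : ∑ t ∈ Finset.range n, a t
          = (n : ℝ) - ∑ t ∈ Finset.range n, S t := by
        simp only [ha, hS]
        rw [Finset.sum_sub_distrib]
        simp [mul_comm]
      have h3 : (n : ℝ) * S n ≤ (n : ℝ) :=
        calc (n : ℝ) * S n ≤ (n : ℝ) * 1 :=
              mul_le_mul_of_nonneg_left (hSle n) (by positivity)
          _ = (n : ℝ) := mul_one _
      rw [hid2, hsum_a]
      have : ∑ t ∈ Finset.range n, S t = ∑ t ∈ Finset.range n, ∑ m ∈ Finset.range t, F m :=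
        rfl
      rw [this]
      linarith
    -- pointwise bound on the difference
    have hptwise : ∀ z, |cesaro P n x z - cesaro P n y z| ≤ (1 / (n : ℝ)) * W z := by
      intro z
      have hcz : cesaro P n x z - cesaro P n y z
          = (1 / (n : ℝ)) * (∑ k ∈ Finset.range n, kStep P k x z
              - ∑ j ∈ Finset.range n, K j z) := by
        simp only [cesaro, hK]
        ring
      rw [hcz, abs_mul, abs_of_nonneg (by positivity : (0:ℝ) ≤ 1 / (n : ℝ))]
      refine mul_le_mul_of_nonneg_left ?_ (by positivity)
      rw [hid z]
      rw [abs_le]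
      constructor
      · simp only [hW]
        nlinarith [hT1nn z, hT2nn z, hT3nn z, hT4nn z]
      · simp only [hW]
        nlinarith [hT1nn z, hT2nn z, hT3nn z, hT4nn z]
    -- sum up
    have hsabs : Summable (fun z => |cesaro P n x z - cesaro P n y z|) := by
      refine (hsW.mul_left (1 / (n : ℝ))).of_nonneg_of_le
        (fun z => abs_nonneg _) hptwise
    calc (∑' z, |cesaro P n x z - cesaro P n y z|)
        ≤ ∑' z, (1 / (n : ℝ)) * W z :=
          Summable.tsum_le_tsum hptwise hsabs (hsW.mul_left _)
      _ = (1 / (n : ℝ)) * ∑' z, W z := tsum_mul_left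
      _ ≤ c n := by
          have htW : ∑' z, W z = (∑' z, T1 z) + (∑' z, T2 z) + (∑' z, T3 z) + (∑' z, T4 z) := by
            simp only [hW]
            rw [Summable.tsum_add ((hsT1.add hsT2).add hsT3) hsT4,
              Summable.tsum_add (hsT1.add hsT2) hsT3, Summable.tsum_add hsT1 hsT2]
          rw [htW, htT2, htT3, htT4]
          have hnn1 : (0:ℝ) ≤ 1 / (n : ℝ) := by positivity
          have hb1 : (1 / (n : ℝ)) * (∑' z, T1 z) ≤ (1 / (n : ℝ)) * ∑ t ∈ Finset.range n, a t :=
            mul_le_mul_of_nonneg_left (le_trans htT1 hweight) hnn1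
          have hb2 : (1 / (n : ℝ)) * S n ≤ 1 / (n : ℝ) := by
            calc (1 / (n : ℝ)) * S n ≤ (1 / (n : ℝ)) * 1 :=
                  mul_le_mul_of_nonneg_left (hSle n) hnn1
              _ = 1 / (n : ℝ) := mul_one _
          have hb4 : (1 / (n : ℝ)) * (a n * n) ≤ a n := by
            rcases Nat.eq_zero_or_pos n with h | h
            · subst h; simpa using hann 0
            · have hne : (n : ℝ) ≠ 0 := by positivity
              rw [mul_comm (a n) ((n : ℝ))]
              rw [← mul_assoc, one_div, inv_mul_cancel₀ hne, one_mul]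
          have hTsnn1 : 0 ≤ ∑' z, T1 z := tsum_nonneg hT1nn
          have expand : (1 / (n : ℝ)) * ((∑' z, T1 z) + S n + (∑ k ∈ Finset.range n, a (k + 1))
              + a n * n)
              = (1 / (n : ℝ)) * (∑' z, T1 z) + (1 / (n : ℝ)) * S n
                + (1 / (n : ℝ)) * (∑ k ∈ Finset.range n, a (k + 1))
                + (1 / (n : ℝ)) * (a n * n) := by ring
          rw [expand]
          show _ ≤ (1 / (n : ℝ)) * (∑ t ∈ Finset.range n, a t) + 1 / (n : ℝ)
            + (1 / (n : ℝ)) * (∑ k ∈ Finset.range n, a (k + 1)) + a n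
          linarith [hb1, hb2, hb4]
  -- squeeze
  refine squeeze_zero (fun n => tsum_nonneg fun z => abs_nonneg _) hbound hctend
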